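/- Let G, H be nonzero formal power series in ℝ[[ρ,θ]] and let ξ < 0. Define the ξ-componential polynomial K_ξ(F)(θ) := Σ_{(i,j) ∈ σ(F,ξ) ∩ Δ(F)} a_{i,j}(F) θ^j, where σ(F,ξ) is the face of ℘(Δ(F)) on which the linear functional (i,j) ↦ i − j/ξ attains its minimum over ℘(Δ(F)). Then K_ξ(G·H) = K_ξ(G) · K_ξ(H). -/

import Mathlib

open scoped Pointwise

/-- The coefficient of `ρ^i θ^j` in a formal power series in two variables over `ℝ`. -/
noncomputable def coef (F : MvPowerSeries (Fin 2) ℝ) (p : ℕ × ℕ) : ℝ :=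
  MvPowerSeries.coeff (R := ℝ) (Finsupp.single (0 : Fin 2) p.1 + Finsupp.single (1 : Fin 2) p.2) F

/-- The support (valid index set) `Δ(F)` of a power series. -/
noncomputable def suppSet (F : MvPowerSeries (Fin 2) ℝ) : Set (ℕ × ℕ) :=
  {p | coef F p ≠ 0}

/-- Embedding of lattice indices into `ℝ²`. -/
noncomputable def embed (p : ℕ × ℕ) : ℝ × ℝ := ((p.1 : ℝ), (p.2 : ℝ))

/-- The lower convex semi-hull `℘(S) = conv(S + ℝ≥0²)` of a set of lattice points. -/
noncomputable def lsh (S : Set (ℕ × ℕ)) : Set (ℝ × ℝ) :=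
  convexHull ℝ (embed '' S + {q : ℝ × ℝ | 0 ≤ q.1 ∧ 0 ≤ q.2})

/-- The linear functional `(u,v) ↦ u − v/ξ`. -/
noncomputable def phiFun (ξ : ℝ) (q : ℝ × ℝ) : ℝ := q.1 - q.2 / ξ

/-- The `ξ`-component `σ(F,ξ)`: the face of `℘(Δ(F))` on which
`(u,v) ↦ u − v/ξ` attains its minimum over `℘(Δ(F))`. -/
noncomputable def component (F : MvPowerSeries (Fin 2) ℝ) (ξ : ℝ) : Set (ℝ × ℝ) :=
  {p | p ∈ lsh (suppSet F) ∧ ∀ q ∈ lsh (suppSet F), phiFun ξ p ≤ phiFun ξ q}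

/-- The `ξ`-componential polynomial `K_ξ(F)(θ) = Σ_{(i,j) ∈ σ(F,ξ) ∩ Δ(F)} a_{i,j} θ^j`. -/
noncomputable def Kpoly (F : MvPowerSeries (Fin 2) ℝ) (ξ : ℝ) : Polynomial ℝ :=
  ∑ᶠ p ∈ {p : ℕ × ℕ | p ∈ suppSet F ∧ embed p ∈ component F ξ},
    Polynomial.C (coef F p) * Polynomial.X ^ p.2

/-! ### Auxiliary machinery -/

namespace KpolyAux

/-- The weight of a lattice point. -/
noncomputable def w (ξ : ℝ) (p : ℕ × ℕ) : ℝ := phiFun ξ (embed p)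

lemma w_def (ξ : ℝ) (p : ℕ × ℕ) : w ξ p = (p.1 : ℝ) - (p.2 : ℝ) / ξ := rfl

lemma w_add (ξ : ℝ) (p q : ℕ × ℕ) : w ξ (p + q) = w ξ p + w ξ q := by
  simp only [w, phiFun, embed, Prod.fst_add, Prod.snd_add]
  push_cast
  ring

lemma eq_of_w_eq {ξ : ℝ} {p q : ℕ × ℕ} (h : w ξ p = w ξ q) (h2 : p.2 = q.2) : p = q := by
  have h1 : (p.1 : ℝ) = (q.1 : ℝ) := by
    simp only [w_def, h2] at h
    linarith
  exact Prod.ext (Nat.cast_inj.mp h1) h2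

lemma finite_sublevel {ξ : ℝ} (hξ : ξ < 0) (M : ℝ) :
    {p : ℕ × ℕ | w ξ p ≤ M}.Finite := by
  apply Set.Finite.subset (Set.finite_Iic (⌈M⌉₊, ⌈M * (-ξ)⌉₊))
  intro p hp
  simp only [Set.mem_setOf_eq, w_def] at hp
  have hd : ((p.2 : ℝ)) / ξ ≤ 0 :=
    div_nonpos_of_nonneg_of_nonpos (Nat.cast_nonneg _) hξ.le
  have h1 : (p.1 : ℝ) ≤ M := by linarith
  have hξ' : (0 : ℝ) < -ξ := by linarith
  have h2' : -((p.2 : ℝ) / ξ) ≤ M := by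
    have : (0 : ℝ) ≤ (p.1 : ℝ) := Nat.cast_nonneg _
    linarith
  have h2 : (p.2 : ℝ) ≤ M * (-ξ) := by
    have he : (p.2 : ℝ) = (-((p.2 : ℝ) / ξ)) * (-ξ) := by
      rw [neg_mul_neg, div_mul_cancel₀ _ hξ.ne]
    rw [he]
    exact mul_le_mul_of_nonneg_right h2' hξ'.le
  constructor
  · exact Nat.cast_le.mp (le_trans h1 (Nat.le_ceil M)) |>.trans (le_refl _)
  · exact Nat.cast_le.mp (le_trans h2 (Nat.le_ceil _))

lemma exists_min {ξ : ℝ} (hξ : ξ < 0) {S : Set (ℕ × ℕ)} (hS : S.Nonempty) :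
    ∃ p0 ∈ S, ∀ p ∈ S, w ξ p0 ≤ w ξ p := by
  obtain ⟨p1, hp1⟩ := hS
  have hfin : ({p ∈ S | w ξ p ≤ w ξ p1}).Finite :=
    (finite_sublevel hξ (w ξ p1)).subset (fun p hp => hp.2)
  have hne : hfin.toFinset.Nonempty := ⟨p1, by simp [hp1]⟩
  obtain ⟨b, hb, hmin⟩ := Finset.exists_min_image hfin.toFinset (w ξ) hne
  rw [Set.Finite.mem_toFinset] at hb
  refine ⟨b, hb.1, fun p hp => ?_⟩
  by_cases hple : w ξ p ≤ w ξ p1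
  · exact hmin p (by rw [Set.Finite.mem_toFinset]; exact ⟨hp, hple⟩)
  · have := hmin p1 (by simp [hp1])
    linarith

lemma phiFun_nonneg {ξ : ℝ} (hξ : ξ < 0) {r : ℝ × ℝ} (hr : 0 ≤ r.1 ∧ 0 ≤ r.2) :
    0 ≤ phiFun ξ r := by
  have : r.2 / ξ ≤ 0 := div_nonpos_of_nonneg_of_nonpos hr.2 hξ.le
  simp only [phiFun]
  linarith [hr.1]

lemma phiFun_add (ξ : ℝ) (x y : ℝ × ℝ) :
    phiFun ξ (x + y) = phiFun ξ x + phiFun ξ y := by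
  simp only [phiFun, Prod.fst_add, Prod.snd_add]
  ring

lemma le_phi_of_mem_lsh {ξ : ℝ} (hξ : ξ < 0) {S : Set (ℕ × ℕ)} {m : ℝ}
    (hm : ∀ p ∈ S, m ≤ w ξ p) : ∀ q ∈ lsh S, m ≤ phiFun ξ q := by
  intro q hq
  have hsub : embed '' S + {q : ℝ × ℝ | 0 ≤ q.1 ∧ 0 ≤ q.2} ⊆ {q | m ≤ phiFun ξ q} := by
    rintro x hx
    rw [Set.mem_add] at hx
    obtain ⟨y, hy, r, hr, rfl⟩ := hx
    obtain ⟨p, hp, rfl⟩ := hy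
    rw [Set.mem_setOf_eq, phiFun_add]
    have h1 := hm p hp
    have h2 := phiFun_nonneg hξ hr
    simp only [w] at h1
    linarith
  have hconv : Convex ℝ {q : ℝ × ℝ | m ≤ phiFun ξ q} := by
    intro x hx y hy a b ha hb hab
    simp only [Set.mem_setOf_eq, phiFun] at *
    have key : (a • x + b • y).1 - (a • x + b • y).2 / ξ
        = a * (x.1 - x.2 / ξ) + b * (y.1 - y.2 / ξ) := by
      simp only [Prod.fst_add, Prod.snd_add, Prod.smul_fst, Prod.smul_snd, smul_eq_mul]
      ring
    rw [key]
    have h1 := mul_le_mul_of_nonneg_left hx ha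
    have h2 := mul_le_mul_of_nonneg_left hy hb
    have hm' : a * m + b * m = m := by rw [← add_mul, hab, one_mul]
    linarith
  exact convexHull_min hsub hconv hq

lemma embed_mem_lsh {S : Set (ℕ × ℕ)} {p : ℕ × ℕ} (hp : p ∈ S) :
    embed p ∈ lsh S := by
  apply subset_convexHull
  have : embed p + (0 : ℝ × ℝ) ∈ embed '' S + {q : ℝ × ℝ | 0 ≤ q.1 ∧ 0 ≤ q.2} :=
    Set.add_mem_add ⟨p, hp, rfl⟩ (by simp)
  simpa using this

lemma mem_component_iff {F : MvPowerSeries (Fin 2) ℝ} {ξ : ℝ} (hξ : ξ < 0)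
    {p0 : ℕ × ℕ} (hp0 : p0 ∈ suppSet F) (hmin : ∀ q ∈ suppSet F, w ξ p0 ≤ w ξ q)
    {p : ℕ × ℕ} (hp : p ∈ suppSet F) :
    embed p ∈ component F ξ ↔ w ξ p = w ξ p0 := by
  constructor
  · rintro ⟨-, h⟩
    have h1 := h (embed p0) (embed_mem_lsh hp0)
    have h2 := hmin p hp
    simp only [w] at *
    linarith
  · intro hw
    refine ⟨embed_mem_lsh hp, fun q hq => ?_⟩
    have := le_phi_of_mem_lsh hξ hmin q hq
    simp only [w] at hw
    rw [hw]
    exact this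

/-! ### The index bijection `ℕ × ℕ ≃ (Fin 2 →₀ ℕ)` -/

noncomputable def e (p : ℕ × ℕ) : Fin 2 →₀ ℕ :=
  Finsupp.single 0 p.1 + Finsupp.single 1 p.2

noncomputable def d (f : Fin 2 →₀ ℕ) : ℕ × ℕ := (f 0, f 1)

lemma d_e (p : ℕ × ℕ) : d (e p) = p := by
  simp [d, e, Finsupp.single_apply]

lemma e_d (f : Fin 2 →₀ ℕ) : e (d f) = f := by
  ext i
  fin_cases i <;> simp [e, d, Finsupp.single_apply]

lemma e_add (p q : ℕ × ℕ) : e (p + q) = e p + e q := by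
  simp only [e, Prod.fst_add, Prod.snd_add, Finsupp.single_add]
  abel

lemma e_inj {p q : ℕ × ℕ} (h : e p = e q) : p = q := by
  have := congrArg d h
  rwa [d_e, d_e] at this

lemma coef_eq (F : MvPowerSeries (Fin 2) ℝ) (p : ℕ × ℕ) :
    coef F p = MvPowerSeries.coeff (R := ℝ) (e p) F := rfl

lemma coef_d (F : MvPowerSeries (Fin 2) ℝ) (f : Fin 2 →₀ ℕ) :
    coef F (d f) = MvPowerSeries.coeff (R := ℝ) f F := by
  rw [coef_eq, e_d]

lemma coef_mul (G H : MvPowerSeries (Fin 2) ℝ) (p : ℕ × ℕ) :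
    coef (G * H) p
      = ∑ x ∈ Finset.HasAntidiagonal.antidiagonal (e p), coef G (d x.1) * coef H (d x.2) := by
  rw [coef_eq, MvPowerSeries.coeff_mul]
  simp only [coef_d]

/-- Key lemma: at a point of minimal weight, the coefficient of the product only
involves face coefficients. -/
lemma star {G H : MvPowerSeries (Fin 2) ℝ} {ξ : ℝ} {mG mH : ℝ}
    (hminG : ∀ q ∈ suppSet G, mG ≤ w ξ q) (hminH : ∀ q ∈ suppSet H, mH ≤ w ξ q)
    {tG tH : Finset (ℕ × ℕ)}
    (htG : ∀ q, q ∈ tG ↔ q ∈ suppSet G ∧ w ξ q = mG)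
    (htH : ∀ q, q ∈ tH ↔ q ∈ suppSet H ∧ w ξ q = mH)
    (p : ℕ × ℕ) (hp : w ξ p = mG + mH) :
    coef (G * H) p
      = ∑ x ∈ (tG ×ˢ tH).filter (fun x => x.1 + x.2 = p), coef G x.1 * coef H x.2 := by
  classical
  rw [coef_mul]
  rw [← Finset.sum_filter_ne_zero (Finset.HasAntidiagonal.antidiagonal (e p)),
      ← Finset.sum_filter_ne_zero ((tG ×ˢ tH).filter (fun x => x.1 + x.2 = p))]
  refine Finset.sum_nbij' (fun x => (d x.1, d x.2)) (fun y => (e y.1, e y.2)) ?_ ?_ ?_ ?_ ?_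
  · rintro a ha
    simp only [Finset.mem_filter, Finset.HasAntidiagonal.mem_antidiagonal] at ha
    obtain ⟨hsum, hne⟩ := ha
    have hq : coef G (d a.1) ≠ 0 := fun h => hne (by rw [h, zero_mul])
    have hr : coef H (d a.2) ≠ 0 := fun h => hne (by rw [h, mul_zero])
    have hqr : d a.1 + d a.2 = p := by
      apply e_inj
      rw [e_add, e_d, e_d, hsum]
    have h1 := hminG (d a.1) hq
    have h2 := hminH (d a.2) hr
    have h3 : w ξ (d a.1) + w ξ (d a.2) = mG + mH := by
      rw [← w_add, hqr, hp]
    simp only [Finset.mem_filter, Finset.mem_product]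
    refine ⟨⟨⟨(htG _).mpr ⟨hq, by linarith⟩, (htH _).mpr ⟨hr, by linarith⟩⟩, hqr⟩, hne⟩
  · rintro b hb
    simp only [Finset.mem_filter, Finset.mem_product] at hb
    obtain ⟨⟨⟨h1, h2⟩, hsum⟩, hne⟩ := hb
    simp only [Finset.mem_filter, Finset.HasAntidiagonal.mem_antidiagonal]
    constructor
    · rw [← e_add, hsum]
    · simpa only [d_e] using hne
  · intro a _
    exact Prod.ext (e_d a.1) (e_d a.2)
  · intro b _
    exact Prod.ext (d_e b.1) (d_e b.2)
  · intro a _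
    rfl

end KpolyAux

open KpolyAux in
/-- `Kpoly` as a finite sum over the minimal-weight part of the support. -/
lemma Kpoly_eq_sum {F : MvPowerSeries (Fin 2) ℝ} {ξ : ℝ} (hξ : ξ < 0)
    {p0 : ℕ × ℕ} (hp0 : p0 ∈ suppSet F) (hmin : ∀ q ∈ suppSet F, w ξ p0 ≤ w ξ q)
    (t : Finset (ℕ × ℕ)) (ht : ∀ q, q ∈ t ↔ q ∈ suppSet F ∧ w ξ q = w ξ p0) :
    Kpoly F ξ = ∑ p ∈ t, Polynomial.C (coef F p) * Polynomial.X ^ p.2 := by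
  have hset : {p : ℕ × ℕ | p ∈ suppSet F ∧ embed p ∈ component F ξ} = ↑t := by
    ext p
    simp only [Set.mem_setOf_eq, Finset.coe_sort_coe, Finset.mem_coe, ht]
    constructor
    · rintro ⟨hs, hc⟩
      exact ⟨hs, (mem_component_iff hξ hp0 hmin hs).mp hc⟩
    · rintro ⟨hs, hw⟩
      exact ⟨hs, (mem_component_iff hξ hp0 hmin hs).mpr hw⟩
  rw [Kpoly, hset, finsum_mem_coe_finset]

lemma coeff_sum_CX {ι : Type*} (t : Finset ι) (a : ι → ℝ) (dg : ι → ℕ) (j : ℕ) :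
    (∑ p ∈ t, Polynomial.C (a p) * Polynomial.X ^ dg p).coeff j
      = ∑ p ∈ t.filter (fun p => dg p = j), a p := by
  classical
  rw [Polynomial.finset_sum_coeff, Finset.sum_filter]
  apply Finset.sum_congr rfl
  intro p _
  rw [Polynomial.coeff_C_mul, Polynomial.coeff_X_pow]
  by_cases h : dg p = j
  · simp [h]
  · rw [if_neg h, if_neg (fun e => h e.symm), mul_zero]

open KpolyAux

/-- the componential polynomial of a product is the product of the
componential polynomials: `K_ξ(G·H) = K_ξ(G) · K_ξ(H)` for every `ξ < 0`. -/
theorem Kpoly_mul (G H : MvPowerSeries (Fin 2) ℝ) (hG : G ≠ 0) (hH : H ≠ 0)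
    (ξ : ℝ) (hξ : ξ < 0) :
    Kpoly (G * H) ξ = Kpoly G ξ * Kpoly H ξ := by
  classical
  -- nonempty supports
  have hsupp_ne : ∀ F : MvPowerSeries (Fin 2) ℝ, F ≠ 0 → (suppSet F).Nonempty := by
    intro F hF
    by_contra h
    apply hF
    rw [Set.not_nonempty_iff_eq_empty] at h
    ext n
    have : d n ∉ suppSet F := by rw [h]; exact Set.notMem_empty _
    simp only [suppSet, Set.mem_setOf_eq, not_not, coef_d] at this
    simpa using this
  obtain ⟨pG, hpG, hminG⟩ := exists_min hξ (hsupp_ne G hG)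
  obtain ⟨pH, hpH, hminH⟩ := exists_min hξ (hsupp_ne H hH)
  -- the face finsets
  have hfinG : {q | q ∈ suppSet G ∧ w ξ q = w ξ pG}.Finite :=
    (finite_sublevel hξ (w ξ pG)).subset (fun q hq => le_of_eq hq.2)
  have hfinH : {q | q ∈ suppSet H ∧ w ξ q = w ξ pH}.Finite :=
    (finite_sublevel hξ (w ξ pH)).subset (fun q hq => le_of_eq hq.2)
  set tG := hfinG.toFinset with htGdef
  set tH := hfinH.toFinset with htHdef
  have htG : ∀ q, q ∈ tG ↔ q ∈ suppSet G ∧ w ξ q = w ξ pG := fun q => hfinG.mem_toFinset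
  have htH : ∀ q, q ∈ tH ↔ q ∈ suppSet H ∧ w ξ q = w ξ pH := fun q => hfinH.mem_toFinset
  -- a point of the product support with minimal weight
  obtain ⟨q0, hq0t, hq0max⟩ :=
    Finset.exists_max_image tG (fun q => q.2) ⟨pG, (htG _).mpr ⟨hpG, rfl⟩⟩
  obtain ⟨r0, hr0t, hr0max⟩ :=
    Finset.exists_max_image tH (fun q => q.2) ⟨pH, (htH _).mpr ⟨hpH, rfl⟩⟩
  have hq0 := (htG q0).mp hq0t
  have hr0 := (htH r0).mp hr0t
  have hwstar : w ξ (q0 + r0) = w ξ pG + w ξ pH := by rw [w_add, hq0.2, hr0.2]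
  have hcstar : coef (G * H) (q0 + r0) = coef G q0 * coef H r0 := by
    rw [star hminG hminH htG htH (q0 + r0) hwstar]
    apply Finset.sum_eq_single_of_mem (q0, r0)
    · simp [Finset.mem_filter, Finset.mem_product, hq0t, hr0t]
    · rintro ⟨q, r⟩ hx hne
      exfalso
      apply hne
      simp only [Finset.mem_filter, Finset.mem_product] at hx
      obtain ⟨⟨hqt, hrt⟩, hsum⟩ := hx
      have h2 : q.2 + r.2 = q0.2 + r0.2 := by
        have := congrArg Prod.snd hsum
        simpa [Prod.snd_add] using this
      have hq2 : q.2 ≤ q0.2 := hq0max q hqt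
      have hr2 : r.2 ≤ r0.2 := hr0max r hrt
      have hq2' : q.2 = q0.2 := by omega
      have hqeq : q = q0 := eq_of_w_eq (by rw [((htG q).mp hqt).2, hq0.2]) hq2'
      have hreq : r = r0 := by
        subst hqeq
        exact add_left_cancel hsum
      rw [hqeq, hreq]
  have hstar_supp : q0 + r0 ∈ suppSet (G * H) := by
    simp only [suppSet, Set.mem_setOf_eq, hcstar]
    exact mul_ne_zero hq0.1 hr0.1
  have hminP : ∀ p ∈ suppSet (G * H), w ξ pG + w ξ pH ≤ w ξ p := by
    intro p hp
    rw [suppSet, Set.mem_setOf_eq, coef_mul] at hp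
    obtain ⟨x, hx, hne⟩ := Finset.exists_ne_zero_of_sum_ne_zero hp
    rw [Finset.HasAntidiagonal.mem_antidiagonal] at hx
    have hqr : d x.1 + d x.2 = p := by
      apply e_inj; rw [e_add, e_d, e_d, hx]
    have h1 : coef G (d x.1) ≠ 0 := fun h => hne (by rw [h, zero_mul])
    have h2 : coef H (d x.2) ≠ 0 := fun h => hne (by rw [h, mul_zero])
    have hw1 := hminG _ h1
    have hw2 := hminH _ h2
    rw [← hqr, w_add]
    linarith
  have hminP' : ∀ p ∈ suppSet (G * H), w ξ (q0 + r0) ≤ w ξ p := by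
    intro p hp; rw [hwstar]; exact hminP p hp
  have hfinP : {p | p ∈ suppSet (G * H) ∧ w ξ p = w ξ (q0 + r0)}.Finite :=
    (finite_sublevel hξ (w ξ (q0 + r0))).subset (fun q hq => le_of_eq hq.2)
  set tP := hfinP.toFinset with htPdef
  have htP : ∀ p, p ∈ tP ↔ p ∈ suppSet (G * H) ∧ w ξ p = w ξ (q0 + r0) :=
    fun p => hfinP.mem_toFinset
  have htP' : ∀ p, p ∈ tP ↔ p ∈ suppSet (G * H) ∧ w ξ p = w ξ pG + w ξ pH := by
    intro p; rw [htP, hwstar]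
  -- rewrite all three Kpoly's as finite sums
  rw [Kpoly_eq_sum hξ hstar_supp hminP' tP htP,
      Kpoly_eq_sum hξ hpG hminG tG htG, Kpoly_eq_sum hξ hpH hminH tH htH]
  -- expand the product
  have hprod : (∑ q ∈ tG, Polynomial.C (coef G q) * Polynomial.X ^ q.2)
      * (∑ r ∈ tH, Polynomial.C (coef H r) * Polynomial.X ^ r.2)
      = ∑ x ∈ tG ×ˢ tH, Polynomial.C (coef G x.1 * coef H x.2)
          * Polynomial.X ^ (x.1.2 + x.2.2) := by
    rw [Finset.sum_mul_sum, Finset.sum_product]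
    apply Finset.sum_congr rfl
    intro q _
    apply Finset.sum_congr rfl
    intro r _
    rw [map_mul]
    ring
  rw [hprod]
  ext j
  rw [coeff_sum_CX tP (fun p => coef (G * H) p) (fun p => p.2) j,
      coeff_sum_CX (tG ×ˢ tH) (fun x => coef G x.1 * coef H x.2)
        (fun x => x.1.2 + x.2.2) j]
  by_cases hne : ((tG ×ˢ tH).filter (fun x => x.1.2 + x.2.2 = j)).Nonempty
  · obtain ⟨x1, hx1⟩ := hne
    simp only [Finset.mem_filter, Finset.mem_product] at hx1
    obtain ⟨⟨hx11, hx12⟩, hdeg1⟩ := hx1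
    set p1 := x1.1 + x1.2 with hp1def
    have hw1 : w ξ p1 = w ξ pG + w ξ pH := by
      rw [hp1def, w_add, ((htG _).mp hx11).2, ((htH _).mp hx12).2]
    have hj1 : p1.2 = j := by
      rw [hp1def, Prod.snd_add, hdeg1]
    have hBset : (tG ×ˢ tH).filter (fun x => x.1.2 + x.2.2 = j)
        = (tG ×ˢ tH).filter (fun x => x.1 + x.2 = p1) := by
      ext x
      simp only [Finset.mem_filter, Finset.mem_product]
      constructor
      · rintro ⟨⟨h1, h2⟩, hd⟩
        refine ⟨⟨h1, h2⟩, ?_⟩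
        apply eq_of_w_eq
        · rw [w_add, ((htG _).mp h1).2, ((htH _).mp h2).2, hw1]
        · rw [Prod.snd_add, hd, hj1]
      · rintro ⟨⟨h1, h2⟩, hd⟩
        refine ⟨⟨h1, h2⟩, ?_⟩
        rw [← hj1, ← hd, Prod.snd_add]
    have hB : ∑ x ∈ (tG ×ˢ tH).filter (fun x => x.1.2 + x.2.2 = j),
        coef G x.1 * coef H x.2 = coef (G * H) p1 := by
      rw [hBset, ← star hminG hminH htG htH p1 hw1]
    rw [hB]
    by_cases hc : coef (G * H) p1 = 0
    · have hA : tP.filter (fun p => p.2 = j) = ∅ := by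
        rw [Finset.eq_empty_iff_forall_notMem]
        intro p hp
        simp only [Finset.mem_filter] at hp
        obtain ⟨hpt, hpj⟩ := hp
        have hmem := (htP' p).mp hpt
        have : p = p1 := eq_of_w_eq (by rw [hmem.2, hw1]) (by rw [hpj, hj1])
        rw [this] at hmem
        exact hmem.1 hc
      rw [hA, hc, Finset.sum_empty]
    · have hp1t : p1 ∈ tP := (htP' p1).mpr ⟨hc, hw1⟩
      have hA : tP.filter (fun p => p.2 = j) = {p1} := by
        apply Finset.eq_singleton_iff_unique_mem.mpr
        refine ⟨Finset.mem_filter.mpr ⟨hp1t, hj1⟩, ?_⟩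
        intro p hp
        simp only [Finset.mem_filter] at hp
        exact eq_of_w_eq (by rw [((htP' p).mp hp.1).2, hw1]) (by rw [hp.2, hj1])
      rw [hA, Finset.sum_singleton]
  · rw [Finset.not_nonempty_iff_eq_empty] at hne
    rw [hne, Finset.sum_empty]
    have hA : tP.filter (fun p => p.2 = j) = ∅ := by
      rw [Finset.eq_empty_iff_forall_notMem]
      intro p hp
      simp only [Finset.mem_filter] at hp
      obtain ⟨hpt, hpj⟩ := hp
      have hmem := (htP' p).mp hpt
      have hz : coef (G * H) p = 0 := by
        rw [star hminG hminH htG htH p hmem.2]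
        have : (tG ×ˢ tH).filter (fun x => x.1 + x.2 = p) = ∅ := by
          rw [Finset.eq_empty_iff_forall_notMem]
          intro x hx
          simp only [Finset.mem_filter, Finset.mem_product] at hx
          have : x ∈ (tG ×ˢ tH).filter (fun x => x.1.2 + x.2.2 = j) := by
            simp only [Finset.mem_filter, Finset.mem_product]
            exact ⟨hx.1, by rw [← hpj, ← hx.2, Prod.snd_add]⟩
          rw [hne] at this
          exact Finset.notMem_empty _ this
        rw [this, Finset.sum_empty]
      exact hmem.1 hz
    rw [hA, Finset.sum_empty]
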